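/- Let p be an odd prime, F = ℚ_p with ring of integers ℤ_p, residue cardinality q = p, uniformizer ϖ = p, normalized valuation v, and Haar measure dx on ℚ_p with vol(ℤ_p) = 1. Let χ₁, χ₂ : F^× → ℂ^× be unramified unitary characters (χ_i(x) = z_i^{v(x)} with |z_i| = 1). Then the integral q·∫_{ℤ_p} χ₁(1+a)|1+a|^{-1/2} · χ₂(a)|a|^{-1/2} da is absolutely convergent and equals q − 2 + (q−1)·(q^{-1/2}z₁ + q^{-1/2}z₂ − 2q^{-1}z₁z₂) / ((1 − q^{-1/2}z₁)(1 − q^{-1/2}z₂)). -/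

import Mathlib

open scoped Classical

open MeasureTheory
open scoped ENNReal NNReal
set_option linter.unusedSectionVars false
set_option linter.unusedVariables false
set_option linter.unnecessarySimpa false

variable {p : ℕ} [Fact p.Prime]

lemma one_lt_p : 1 < (p:ℝ) := by exact_mod_cast (Fact.out : p.Prime).one_lt
lemma p_pos : (0:ℝ) < p := lt_trans one_pos one_lt_p

lemma val_eq_of_norm' {x : ℚ_[p]} (hx : x ≠ 0) {n : ℤ} (h : ‖x‖ = (p:ℝ)^(-n)) :
    x.valuation = n := by
  have h1 := Padic.norm_eq_zpow_neg_valuation hx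
  have h2 : (p:ℝ)^(-x.valuation) = (p:ℝ)^(-n) := by rw [← h1, h]
  have := zpow_right_injective₀ p_pos (ne_of_gt one_lt_p) h2
  omega

lemma val_zero_of_norm_one {x : ℚ_[p]} (h : ‖x‖ = 1) : x.valuation = 0 := by
  have hx : x ≠ 0 := by intro h0; rw [h0] at h; simp at h
  exact val_eq_of_norm' hx (by simpa using h)



variable [MeasurableSpace ℚ_[p]] [BorelSpace ℚ_[p]]

lemma measurable_valuation :
    Measurable (Padic.valuation : ℚ_[p] → ℤ) := by
  apply measurable_to_countable'
  intro n
  have : ((Padic.valuation : ℚ_[p] → ℤ) ⁻¹' {n}) =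
      ({x : ℚ_[p] | ‖x‖ = (p:ℝ)^(-n)} \ {0}) ∪ (if n = 0 then {(0:ℚ_[p])} else ∅) := by
    ext x
    by_cases hx : x = 0
    · subst hx
      by_cases hn : n = 0 <;>
        simp [hn, Padic.valuation_zero, Ne.symm, (zpow_pos (p_pos (p:=p)) (-n)).ne']
    · simp only [Set.mem_preimage, Set.mem_singleton_iff, Set.mem_union, Set.mem_diff,
        Set.mem_setOf_eq, hx]
      constructor
      · rintro rfl
        exact Or.inl ⟨Padic.norm_eq_zpow_neg_valuation hx, not_false⟩
      · rintro (⟨h1, -⟩ | h1)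
        · exact val_eq_of_norm' hx h1
        · exfalso
          by_cases hn : n = 0 <;> simp [hn] at h1
          exact hx h1
  rw [this]
  apply MeasurableSet.union
  · exact ((isClosed_eq continuous_norm continuous_const).measurableSet).diff (measurableSet_singleton 0)
  · split <;> simp



lemma ball_closed (r : ℝ) : MeasurableSet {x : ℚ_[p] | ‖x‖ ≤ r} :=
  (isClosed_le continuous_norm continuous_const).measurableSet
variable (μ : Measure ℚ_[p]) [μ.IsAddHaarMeasure]

lemma ball_compact (r : ℝ) : μ {x : ℚ_[p] | ‖x‖ ≤ r} ≠ ⊤ := by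
  have : {x : ℚ_[p] | ‖x‖ ≤ r} = Metric.closedBall 0 r := by
    ext x; simp [Metric.mem_closedBall, dist_eq_norm]
  rw [this]
  exact (isCompact_closedBall _ _).measure_ne_top

lemma ball_meas (hμ : μ {x : ℚ_[p] | ‖x‖ ≤ 1} = 1) (n : ℕ) :
    μ {x : ℚ_[p] | ‖x‖ ≤ (p:ℝ)^(-(n:ℤ))} = ((p:ℝ≥0∞)^n)⁻¹ := by
  set B : Set ℚ_[p] := {x | ‖x‖ ≤ (p:ℝ)^(-(n:ℤ))} with hB
  -- cover
  have hcover : {x : ℚ_[p] | ‖x‖ ≤ 1} =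
      ⋃ m ∈ Finset.range (p^n), ((fun x => x + (-(m:ℚ_[p]))) ⁻¹' B) := by
    ext x
    simp only [Set.mem_setOf_eq, Set.mem_iUnion, Finset.mem_range, Set.mem_preimage, hB]
    constructor
    · intro hx
      set X : ℤ_[p] := ⟨x, hx⟩ with hX
      refine ⟨X.appr n, PadicInt.appr_lt X n, ?_⟩
      have hd : (p:ℤ_[p])^n ∣ X - (X.appr n : ℤ_[p]) := by
        have := PadicInt.appr_spec n X
        rwa [Ideal.mem_span_singleton] at this
      have := (PadicInt.norm_le_pow_iff_mem_span_pow (X - (X.appr n : ℤ_[p])) n).2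
        (by rwa [Ideal.mem_span_singleton])
      calc ‖x + -((X.appr n : ℕ) : ℚ_[p])‖
          = ‖((X - (X.appr n : ℤ_[p]) : ℤ_[p]) : ℚ_[p])‖ := by push_cast; rw [show ((X : ℚ_[p])) = x from rfl]; ring_nf
        _ = ‖(X - (X.appr n : ℤ_[p]) : ℤ_[p])‖ := by rw [PadicInt.padic_norm_e_of_padicInt]
        _ ≤ (p:ℝ)^(-(n:ℤ)) := this
    · rintro ⟨m, hm, hle⟩
      have h1 : ‖(m : ℚ_[p])‖ ≤ 1 := by
        have := Padic.norm_int_le_one (p := p) (m : ℤ)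
        simpa using this
      have h2 : (p:ℝ)^(-(n:ℤ)) ≤ 1 := by
        apply zpow_le_one_of_nonpos₀ (le_of_lt one_lt_p); omega
      calc ‖x‖ = ‖(x + -(m:ℚ_[p])) + (m:ℚ_[p])‖ := by ring_nf
        _ ≤ max ‖x + -(m:ℚ_[p])‖ ‖(m:ℚ_[p])‖ := Padic.nonarchimedean _ _
        _ ≤ 1 := max_le (le_trans hle h2) h1
  -- disjoint
  have tri : ∀ u v : ℚ_[p], ‖u - v‖ ≤ max ‖u‖ ‖v‖ := fun u v => by
    rw [sub_eq_add_neg]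
    calc ‖u + -v‖ ≤ max ‖u‖ ‖-v‖ := Padic.nonarchimedean u (-v)
      _ = max ‖u‖ ‖v‖ := by rw [norm_neg]
  have hdisj : (↑(Finset.range (p^n)) : Set ℕ).PairwiseDisjoint
      (fun m => ((fun x => x + (-(m:ℚ_[p]))) ⁻¹' B)) := by
    intro a ha b hb hab
    simp only [Finset.coe_range, Set.mem_Iio] at ha hb
    refine Set.disjoint_left.2 fun x hxa hxb => hab ?_
    simp only [Set.mem_preimage, hB, Set.mem_setOf_eq] at hxa hxb
    set k : ℤ := (a:ℤ) - b with hk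
    have hnk : ‖(k : ℚ_[p])‖ ≤ (p:ℝ)^(-(n:ℤ)) := by
      have hkeq : ((k : ℚ_[p])) = (x + -((b:ℕ):ℚ_[p])) - (x + -((a:ℕ):ℚ_[p])) := by
        rw [hk]; push_cast; ring
      rw [hkeq]
      exact le_trans (tri _ _) (max_le hxb hxa)
    rw [Padic.norm_int_le_pow_iff_dvd] at hnk
    have h0 : k = 0 := Int.eq_zero_of_abs_lt_dvd hnk (by
      have h1 : ((a:ℤ)) < (p:ℤ)^n := by exact_mod_cast ha
      have h2 : ((b:ℤ)) < (p:ℤ)^n := by exact_mod_cast hb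
      rw [hk, abs_sub_lt_iff]; omega)
    omega
  have key : (1:ℝ≥0∞) = (p^n : ℕ) * μ B := by
    rw [← hμ, hcover, measure_biUnion_finset hdisj
      (fun m _ => (ball_closed _).preimage (measurable_add_const _))]
    simp only [measure_preimage_add_right]
    simp [Finset.sum_const]
  have hpn : ((p^n : ℕ) : ℝ≥0∞) ≠ 0 := by
    exact_mod_cast (pow_pos (Fact.out : p.Prime).pos n).ne'
  have hpnt : ((p^n : ℕ) : ℝ≥0∞) ≠ ⊤ := by simp
  have : μ B = ((p^n : ℕ) : ℝ≥0∞)⁻¹ := by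
    have h2 := congrArg (fun t => ((p^n : ℕ) : ℝ≥0∞)⁻¹ * t) key
    simp only [mul_one] at h2
    rw [← mul_assoc, ENNReal.inv_mul_cancel hpn hpnt, one_mul] at h2
    exact h2.symm
  rw [this]; push_cast; rw [ENNReal.inv_pow]

lemma sphere_eq (n : ℕ) : {x : ℚ_[p] | ‖x‖ = (p:ℝ)^(-(n:ℤ))} =
    {x : ℚ_[p] | ‖x‖ ≤ (p:ℝ)^(-(n:ℤ))} \ {x : ℚ_[p] | ‖x‖ ≤ (p:ℝ)^(-((n:ℤ)+1))} := by
  ext x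
  simp only [Set.mem_setOf_eq, Set.mem_diff, not_le]
  constructor
  · intro h
    refine ⟨le_of_eq h, ?_⟩
    rw [h]
    exact zpow_lt_zpow_right₀ one_lt_p (by omega)
  · rintro ⟨h1, h2⟩
    have hx : x ≠ 0 := by
      intro h0; rw [h0, norm_zero] at h2
      exact absurd h2 (not_lt.2 (le_of_lt (zpow_pos p_pos _)))
    have hv := Padic.norm_eq_zpow_neg_valuation hx
    rw [hv] at h1 h2 ⊢
    have hle : (n:ℤ) ≤ x.valuation := by
      have := (zpow_le_zpow_iff_right₀ one_lt_p).1 h1; omega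
    have hlt : x.valuation < (n:ℤ)+1 := by
      have := (zpow_lt_zpow_iff_right₀ one_lt_p).1 h2; omega
    congr 1
    omega

lemma sphere_meas (hμ : μ {x : ℚ_[p] | ‖x‖ ≤ 1} = 1) (n : ℕ) :
    μ {x : ℚ_[p] | ‖x‖ = (p:ℝ)^(-(n:ℤ))} = ((p:ℝ≥0∞)^n)⁻¹ - ((p:ℝ≥0∞)^(n+1))⁻¹ := by
  rw [sphere_eq]
  have hsub : {x : ℚ_[p] | ‖x‖ ≤ (p:ℝ)^(-((n:ℤ)+1))} ⊆ {x : ℚ_[p] | ‖x‖ ≤ (p:ℝ)^(-(n:ℤ))} := by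
    intro x hx
    exact le_trans hx (zpow_le_zpow_right₀ (le_of_lt one_lt_p) (by omega))
  rw [measure_diff hsub ((ball_closed _).nullMeasurableSet) (ball_compact μ _)]
  have e1 : ((-(n:ℤ))+(-1)) = (-(((n+1:ℕ)):ℤ)) := by push_cast; ring
  have h2 : μ {x : ℚ_[p] | ‖x‖ ≤ (p:ℝ)^(-((n:ℤ)+1))} = ((p:ℝ≥0∞)^(n+1))⁻¹ := by
    have : (-((n:ℤ)+1)) = (-(((n+1:ℕ)):ℤ)) := by push_cast; ring
    rw [this, ball_meas μ hμ (n+1)]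
  rw [ball_meas μ hμ n, h2]

lemma sphere_meas_real (hμ : μ {x : ℚ_[p] | ‖x‖ ≤ 1} = 1) (n : ℕ) :
    (μ {x : ℚ_[p] | ‖x‖ = (p:ℝ)^(-(n:ℤ))}).toReal = ((p:ℝ)^n)⁻¹ - ((p:ℝ)^(n+1))⁻¹ := by
  rw [sphere_meas μ hμ n]
  rw [ENNReal.toReal_sub_of_le]
  · congr 1 <;> simp [ENNReal.toReal_inv]
  · apply ENNReal.inv_le_inv.2
    apply pow_le_pow_right₀ (by exact_mod_cast (Fact.out : p.Prime).one_le) (by omega)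
  · simp [(Fact.out : p.Prime).ne_zero]

lemma key_integral (hμ : μ {x : ℚ_[p] | ‖x‖ ≤ 1} = 1)
    (z qih : ℂ) (hz : ‖z‖ = 1) (hqih : qih^2 = (p:ℂ)⁻¹) (c : ℚ_[p]) :
    IntegrableOn (fun x : ℚ_[p] =>
        if x = c then 0 else z ^ (x - c).valuation * qih ^ (-(x - c).valuation))
      {x : ℚ_[p] | ‖x - c‖ ≤ (p:ℝ)^(-1:ℤ)} μ ∧
    ∫ x in {x : ℚ_[p] | ‖x - c‖ ≤ (p:ℝ)^(-1:ℤ)},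
      (if x = c then 0 else z ^ (x - c).valuation * qih ^ (-(x - c).valuation)) ∂μ
      = (1 - (p:ℂ)⁻¹) * (z * qih) / (1 - z * qih) := by
  set f : ℚ_[p] → ℂ := fun x =>
    if x = c then 0 else z ^ (x - c).valuation * qih ^ (-(x - c).valuation) with hf
  have hp0 : (p:ℂ) ≠ 0 := by exact_mod_cast (Fact.out : p.Prime).ne_zero
  have hq0 : qih ≠ 0 := by
    intro h
    apply hp0
    rw [h] at hqih
    have h2 : ((p:ℂ))⁻¹ = 0 := by rw [← hqih]; ring
    simpa using h2
  have hz0 : z ≠ 0 := by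
    intro h; rw [h] at hz; simp at hz
  -- norm facts
  have hnq2 : ‖qih‖^2 = (p:ℝ)⁻¹ := by
    have := congrArg norm hqih
    rw [norm_pow, norm_inv] at this
    simpa using this
  have hnqlt : ‖qih‖ < 1 := by
    nlinarith [norm_nonneg qih, one_lt_p (p := p), inv_lt_one_of_one_lt₀ (one_lt_p (p := p))]
  have hxlt : ‖z * qih‖ < 1 := by
    rw [norm_mul]
    have : ‖z‖ = 1 := hz
    rw [this, one_mul]; exact hnqlt
  have hden : (1 : ℂ) - z * qih ≠ 0 := by
    intro h
    have : (1:ℂ) = z * qih := by linear_combination h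
    have := congrArg norm this
    rw [norm_one] at this
    rw [← this] at hxlt
    simp at hxlt
  -- measurability of f
  have hmf : Measurable f := by
    apply Measurable.ite (measurableSet_eq) measurable_const
    apply Measurable.mul
    · exact (measurable_from_top (f := fun n : ℤ => z ^ n)).comp
        ((measurable_valuation (p := p)).comp (measurable_id.sub_const c))
    · exact (measurable_from_top (f := fun n : ℤ => qih ^ (-n))).comp
        ((measurable_valuation (p := p)).comp (measurable_id.sub_const c))
  -- spheres
  set s : ℕ → Set ℚ_[p] := fun k => {x | ‖x - c‖ = (p:ℝ)^(-((k:ℤ)+1))} with hs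
  have hms : ∀ k, MeasurableSet (s k) := fun k =>
    (isClosed_eq ((continuous_id.sub continuous_const).norm) continuous_const).measurableSet
  have hdisjs : Pairwise (Function.onFun Disjoint s) := by
    intro a b hab
    refine Set.disjoint_left.2 fun x hxa hxb => hab ?_
    simp only [hs, Set.mem_setOf_eq] at hxa hxb
    have := zpow_right_injective₀ p_pos (ne_of_gt one_lt_p) (hxa ▸ hxb ▸ rfl : (p:ℝ)^(-((a:ℤ)+1)) = (p:ℝ)^(-((b:ℤ)+1)))
    omega
  have hU : (⋃ k, s k) = {x : ℚ_[p] | ‖x - c‖ ≤ (p:ℝ)^(-1:ℤ)} \ {c} := by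
    ext x
    simp only [Set.mem_iUnion, hs, Set.mem_setOf_eq, Set.mem_diff, Set.mem_singleton_iff]
    constructor
    · rintro ⟨k, hk⟩
      have hxc : x - c ≠ 0 := by
        intro h; rw [h, norm_zero] at hk
        exact absurd hk.symm (ne_of_gt (zpow_pos p_pos _))
      refine ⟨?_, fun h => hxc (by rw [h, sub_self])⟩
      rw [hk]
      exact zpow_le_zpow_right₀ (le_of_lt one_lt_p) (by omega)
    · rintro ⟨h1, h2⟩
      have hxc : x - c ≠ 0 := sub_ne_zero.2 h2
      have hv := Padic.norm_eq_zpow_neg_valuation hxc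
      have hv1 : 1 ≤ (x - c).valuation := by
        rw [hv] at h1
        have := (zpow_le_zpow_iff_right₀ (one_lt_p (p := p))).1 h1
        omega
      refine ⟨((x - c).valuation - 1).toNat, ?_⟩
      rw [hv]
      congr 1
      omega
  -- value of f on s k
  have hfval : ∀ k : ℕ, Set.EqOn f (fun _ => z ^ ((k:ℤ)+1) * qih ^ (-((k:ℤ)+1))) (s k) := by
    intro k x hx
    simp only [hs, Set.mem_setOf_eq] at hx
    have hxc : x - c ≠ 0 := by
      intro h; rw [h, norm_zero] at hx
      exact absurd hx.symm (ne_of_gt (zpow_pos p_pos _))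
    have hval : (x - c).valuation = (k:ℤ)+1 := val_eq_of_norm' hxc hx
    have hxne : x ≠ c := fun h => hxc (by rw [h, sub_self])
    simp only [hf, if_neg hxne, hval]
  -- measure of s k
  have hmeas_s : ∀ k : ℕ, μ (s k) = μ {y : ℚ_[p] | ‖y‖ = (p:ℝ)^(-((k+1:ℕ):ℤ))} := by
    intro k
    have : s k = (fun x => x + (-c)) ⁻¹' {y : ℚ_[p] | ‖y‖ = (p:ℝ)^(-((k+1:ℕ):ℤ))} := by
      ext x
      simp only [hs, Set.mem_setOf_eq, Set.mem_preimage]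
      rw [← sub_eq_add_neg]
      norm_num
    rw [this, measure_preimage_add_right]
  have hsk : ∀ k : ℕ, μ (s k) = ((p:ℝ≥0∞)^(k+1))⁻¹ - ((p:ℝ≥0∞)^(k+2))⁻¹ := by
    intro k
    rw [hmeas_s k, sphere_meas μ hμ (k+1)]
  have hsk_real : ∀ k : ℕ, (μ (s k)).toReal = ((p:ℝ)^(k+1))⁻¹ - ((p:ℝ)^(k+2))⁻¹ := by
    intro k
    rw [hmeas_s k, sphere_meas_real μ hμ (k+1)]
  have hae : {x : ℚ_[p] | ‖x - c‖ ≤ (p:ℝ)^(-1:ℤ)} =ᵐ[μ] ⋃ k, s k := by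
    rw [ae_eq_set]
    constructor
    · have hsub : {x : ℚ_[p] | ‖x - c‖ ≤ (p:ℝ)^(-1:ℤ)} \ (⋃ k, s k) ⊆ {c} := by
        rw [hU]
        intro x hx
        simp only [Set.mem_diff, Set.mem_singleton_iff, not_and, not_not] at hx ⊢
        exact hx.2 hx.1
      exact measure_mono_null hsub (measure_singleton c)
    · have h0 : (⋃ k, s k) \ {x : ℚ_[p] | ‖x - c‖ ≤ (p:ℝ)^(-1:ℤ)} = ∅ := by
        rw [hU]
        exact Set.diff_eq_empty.2 Set.diff_subset
      rw [h0]
      simp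
  -- nnnorm facts
  set r : ℝ≥0 := ‖qih‖₊ with hrdef
  have hr0 : r ≠ 0 := nnnorm_ne_zero_iff.2 hq0
  have hpn0 : ((p:ℝ≥0)) ≠ 0 := by exact_mod_cast (Fact.out : p.Prime).ne_zero
  have hr2 : r^2 = ((p:ℝ≥0))⁻¹ := by
    have : ((r^2 : ℝ≥0) : ℝ) = (((p:ℝ≥0))⁻¹ : ℝ) := by
      push_cast [hrdef, coe_nnnorm]
      exact hnq2
    exact_mod_cast this
  have hr1 : r < 1 := by
    rw [hrdef]
    exact_mod_cast hnqlt
  have hrpn : r * (p:ℝ≥0) = r⁻¹ := by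
    have h2 : r * r * (p:ℝ≥0) = 1 := by
      rw [← sq, hr2, inv_mul_cancel₀ hpn0]
    calc r * (p:ℝ≥0) = r⁻¹ * (r * r * (p:ℝ≥0)) := by
          rw [← mul_assoc, ← mul_assoc, inv_mul_cancel₀ hr0, one_mul]
      _ = r⁻¹ := by rw [h2, mul_one]
  have hnz : ‖z‖₊ = 1 := by
    have : ‖z‖ = 1 := hz
    ext
    simpa [coe_nnnorm] using this
  have hnormval : ∀ k : ℕ, ∀ x ∈ s k, (‖f x‖₊ : ℝ≥0∞) = ((r ^ (-((k:ℤ)+1)) : ℝ≥0) : ℝ≥0∞) := by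
    intro k x hx
    rw [hfval k hx]
    rw [nnnorm_mul, nnnorm_zpow, nnnorm_zpow, hnz, one_zpow, one_mul]
  -- finite lintegral on the union
  have hfin : ∫⁻ x in (⋃ k, s k), (‖f x‖₊ : ℝ≥0∞) ∂μ < ⊤ := by
    rw [lintegral_iUnion hms hdisjs]
    have hbound : ∀ k : ℕ, ∫⁻ x in s k, (‖f x‖₊ : ℝ≥0∞) ∂μ ≤ ((r:ℝ≥0∞))^(k+1) := by
      intro k
      have heq : ∫⁻ x in s k, (‖f x‖₊ : ℝ≥0∞) ∂μ
          = ((r ^ (-((k:ℤ)+1)) : ℝ≥0) : ℝ≥0∞) * μ (s k) := by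
        rw [setLIntegral_congr_fun (hms k) (fun x hx => hnormval k x hx)]
        exact setLIntegral_const _ _
      rw [heq, hsk k]
      calc ((r ^ (-((k:ℤ)+1)) : ℝ≥0) : ℝ≥0∞) * (((p:ℝ≥0∞)^(k+1))⁻¹ - ((p:ℝ≥0∞)^(k+2))⁻¹)
          ≤ ((r ^ (-((k:ℤ)+1)) : ℝ≥0) : ℝ≥0∞) * ((p:ℝ≥0∞)^(k+1))⁻¹ := by
            gcongr
            exact tsub_le_self
        _ = ((r:ℝ≥0∞))^(k+1) := by
            have hcast : ((p:ℝ≥0∞)^(k+1))⁻¹ = (((((p:ℝ≥0))^(k+1))⁻¹ : ℝ≥0) : ℝ≥0∞) := by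
              rw [ENNReal.coe_inv (by positivity), ENNReal.coe_pow]
              simp
            rw [hcast, ← ENNReal.coe_mul, ← ENNReal.coe_pow]
            congr 1
            have : r ^ (-((k:ℤ)+1)) = (r^(k+1))⁻¹ := by
              have he : (-((k:ℤ)+1)) = (-((k+1:ℕ):ℤ)) := by push_cast; ring
              rw [he, ← zpow_natCast r (k+1), ← zpow_neg]
            rw [this, ← mul_inv, ← mul_pow, hrpn]
            rw [← inv_pow, inv_inv]
    calc ∑' k, ∫⁻ x in s k, (‖f x‖₊ : ℝ≥0∞) ∂μ ≤ ∑' k : ℕ, ((r:ℝ≥0∞))^(k+1) := ENNReal.tsum_le_tsum hbound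
      _ ≤ ∑' k : ℕ, ((r:ℝ≥0∞))^k := by
          apply ENNReal.tsum_le_tsum
          intro k
          exact pow_le_pow_of_le_one zero_le (by exact_mod_cast hr1.le) (by omega)
      _ = (1 - (r:ℝ≥0∞))⁻¹ := ENNReal.tsum_geometric _
      _ < ⊤ := ENNReal.inv_lt_top.2 (by
          rw [tsub_pos_iff_lt]
          exact_mod_cast hr1)
  have hint_union : IntegrableOn f (⋃ k, s k) μ := by
    refine ⟨hmf.aestronglyMeasurable, ?_⟩
    exact hfin
  have hint : IntegrableOn f {x : ℚ_[p] | ‖x - c‖ ≤ (p:ℝ)^(-1:ℤ)} μ := by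
    rw [IntegrableOn, Measure.restrict_congr_set hae]
    exact hint_union
  refine ⟨hint, ?_⟩
  have hsum := hasSum_integral_iUnion hms hdisjs hint_union
  have hterm : ∀ k : ℕ, ∫ x in s k, f x ∂μ = ((1 - (p:ℂ)⁻¹) * (z * qih)) * (z * qih)^k := by
    intro k
    rw [setIntegral_congr_fun (hms k) (hfval k), setIntegral_const, measureReal_def, hsk_real k,
      Complex.real_smul]
    have hz1 : z ^ ((k:ℤ)+1) = z^(k+1) := by
      have he : ((k:ℤ)+1) = (((k+1:ℕ)):ℤ) := by push_cast; ring
      rw [he, zpow_natCast]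
    have hq1 : qih ^ (-((k:ℤ)+1)) = (qih^(k+1))⁻¹ := by
      have he : (-((k:ℤ)+1)) = (-(((k+1:ℕ)):ℤ)) := by push_cast; ring
      rw [he, ← zpow_natCast qih (k+1), ← zpow_neg]
    have hpinv : (p:ℂ)⁻¹ = qih^2 := hqih.symm
    have hpc : (p:ℂ) = (qih^2)⁻¹ := by rw [← hpinv, inv_inv]
    rw [hz1, hq1]
    push_cast
    rw [hpc]
    have hq20 : qih^2 ≠ 0 := pow_ne_zero _ hq0
    have hu : (qih * qih⁻¹) ^ (k + 1) = 1 := by rw [mul_inv_cancel₀ hq0, one_pow]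
    simp only [inv_pow, inv_inv]
    linear_combination (1 - qih^2) * qih^(k+1) * z^(k+1) * hu
  have hgeo : HasSum (fun k : ℕ => ((1 - (p:ℂ)⁻¹) * (z * qih)) * (z * qih)^k)
      (((1 - (p:ℂ)⁻¹) * (z * qih)) * (1 - z*qih)⁻¹) :=
    (hasSum_geometric_of_norm_lt_one hxlt).mul_left _
  rw [show (fun n : ℕ => ∫ x in s n, f x ∂μ)
      = fun k : ℕ => ((1 - (p:ℂ)⁻¹) * (z * qih)) * (z * qih)^k from funext hterm] at hsum
  have hveq := hsum.unique hgeo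
  rw [setIntegral_congr_set hae, hveq, div_eq_mul_inv]

lemma val_zero_of_unit {x : ℚ_[p]} (h1 : ‖x‖ ≤ 1) (h2 : ¬ ‖x‖ ≤ (p:ℝ)^(-1:ℤ)) :
    x ≠ 0 ∧ x.valuation = 0 := by
  have hx0 : x ≠ 0 := by
    rintro rfl
    exact h2 (by simpa using (zpow_pos (p_pos (p:=p)) (-1:ℤ)).le)
  refine ⟨hx0, ?_⟩
  have hv := Padic.norm_eq_zpow_neg_valuation hx0
  rw [hv] at h1 h2
  have hle : 0 ≤ x.valuation := by
    have h3 : (p:ℝ)^(-x.valuation) ≤ (p:ℝ)^(0:ℤ) := by simpa using h1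
    have := (zpow_le_zpow_iff_right₀ (one_lt_p (p:=p))).1 h3
    omega
  have hlt : x.valuation < 1 := by
    by_contra hc
    push_neg at hc
    exact h2 (zpow_le_zpow_right₀ (le_of_lt (one_lt_p (p:=p))) (by omega))
  omega


/-- Let `F = ℚ_p` (p odd) with Haar measure `μ` normalized by `μ(ℤ_p) = 1`, and let
`χᵢ` be unramified unitary characters of `F^×`, i.e. `χᵢ(x) = zᵢ^{v(x)}` with `|zᵢ| = 1`.
Let `qih` be a fixed square root of `q⁻¹ = p⁻¹` (playing the role of `q^{-1/2}`), so that
`|x|^{-1/2} = qih^{-v(x)}`.  Then the integral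
`q·∫_{ℤ_p} χ₁(1+a)|1+a|^{-1/2} χ₂(a)|a|^{-1/2} da` (integrand extended by `0` on the
measure-zero set `{0, -1}`) is absolutely convergent and equals
`q − 2 + (q−1)(q^{-1/2}z₁ + q^{-1/2}z₂ − 2q^{-1}z₁z₂)/((1 − q^{-1/2}z₁)(1 − q^{-1/2}z₂))`. -/
theorem stmt_3 (p : ℕ) [Fact p.Prime] (hodd : Odd p)
    [MeasurableSpace ℚ_[p]] [BorelSpace ℚ_[p]]
    (μ : Measure ℚ_[p]) [μ.IsAddHaarMeasure]
    (hμ : μ {x : ℚ_[p] | ‖x‖ ≤ 1} = 1)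
    (z₁ z₂ : ℂ) (hz₁ : ‖z₁‖ = 1) (hz₂ : ‖z₂‖ = 1)
    (qih : ℂ) (hqih : qih ^ 2 = (p : ℂ)⁻¹) :
    MeasureTheory.IntegrableOn
      (fun a : ℚ_[p] =>
        if a = 0 ∨ a = -1 then (0 : ℂ)
        else z₁ ^ (1 + a).valuation * qih ^ (-(1 + a).valuation) *
          (z₂ ^ a.valuation * qih ^ (-a.valuation)))
      {x : ℚ_[p] | ‖x‖ ≤ 1} μ ∧
    (p : ℂ) * ∫ a in {x : ℚ_[p] | ‖x‖ ≤ 1},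
        (if a = 0 ∨ a = -1 then (0 : ℂ)
         else z₁ ^ (1 + a).valuation * qih ^ (-(1 + a).valuation) *
           (z₂ ^ a.valuation * qih ^ (-a.valuation))) ∂μ
      = (p : ℂ) - 2 + ((p : ℂ) - 1) * (qih * z₁ + qih * z₂ - 2 * (p : ℂ)⁻¹ * (z₁ * z₂)) /
          ((1 - qih * z₁) * (1 - qih * z₂)) := by
  have hp0 : (p:ℂ) ≠ 0 := by exact_mod_cast (Fact.out : p.Prime).ne_zero
  have hpinv_lt : (p:ℝ)^(-1:ℤ) < 1 := by
    rw [zpow_neg_one]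
    exact inv_lt_one_of_one_lt₀ one_lt_p
  set F : ℚ_[p] → ℂ := fun a =>
    if a = 0 ∨ a = -1 then (0 : ℂ)
    else z₁ ^ (1 + a).valuation * qih ^ (-(1 + a).valuation) *
      (z₂ ^ a.valuation * qih ^ (-a.valuation)) with hF
  set Z : Set ℚ_[p] := {x | ‖x‖ ≤ 1} with hZ
  set V : Set ℚ_[p] := {x | ‖x‖ ≤ (p:ℝ)^(-1:ℤ)} with hV
  set W : Set ℚ_[p] := {x | ‖x - (-1)‖ ≤ (p:ℝ)^(-1:ℤ)} with hW
  set U : Set ℚ_[p] := Z \ (V ∪ W) with hU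
  have hmZ : MeasurableSet Z := ball_closed 1
  have hmV : MeasurableSet V := ball_closed _
  have hmW : MeasurableSet W :=
    (isClosed_le ((continuous_id.sub continuous_const).norm) continuous_const).measurableSet
  have hmU : MeasurableSet U := hmZ.diff (hmV.union hmW)
  -- norm facts on W
  have hWx : ∀ x ∈ W, ‖x‖ = 1 := by
    intro x hx
    simp only [hW, Set.mem_setOf_eq, sub_neg_eq_add] at hx
    have hne : ‖x + 1‖ ≠ ‖(-1 : ℚ_[p])‖ := by
      rw [norm_neg, norm_one]
      exact ne_of_lt (lt_of_le_of_lt hx hpinv_lt)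
    calc ‖x‖ = ‖(x + 1) + (-1)‖ := by ring_nf
      _ = max ‖x + 1‖ ‖(-1:ℚ_[p])‖ := Padic.add_eq_max_of_ne hne
      _ = 1 := by
          rw [norm_neg, norm_one]
          exact max_eq_right (le_trans hx hpinv_lt.le)
  have hVZ : V ⊆ Z := fun x hx => le_trans hx hpinv_lt.le
  have hWZ : W ⊆ Z := fun x hx => le_of_eq (hWx x hx)
  have hdVW : Disjoint V W := by
    rw [Set.disjoint_left]
    intro x hxV hxW
    have := hWx x hxW
    simp only [hV, Set.mem_setOf_eq] at hxV
    rw [this] at hxV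
    exact absurd hxV (not_le.2 hpinv_lt)
  have hZdecomp : Z = U ∪ (V ∪ W) := by
    rw [hU, Set.diff_union_of_subset (Set.union_subset hVZ hWZ)]
  have hdU : Disjoint U (V ∪ W) := Set.disjoint_sdiff_left
  -- measures
  have hμV : μ V = (p:ℝ≥0∞)⁻¹ := by
    have h1 := ball_meas μ hμ 1
    simp only [Nat.cast_one, pow_one] at h1
    rw [hV]
    exact h1
  have hμW : μ W = (p:ℝ≥0∞)⁻¹ := by
    have hWpre : W = (fun x => x + 1) ⁻¹' V := by
      ext x
      simp [hW, hV, sub_neg_eq_add]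
    rw [hWpre, measure_preimage_add_right, hμV]
  have hμVW : μ (V ∪ W) = 2 * (p:ℝ≥0∞)⁻¹ := by
    rw [measure_union hdVW hmW, hμV, hμW, two_mul]
  have hμVW_ne : μ (V ∪ W) ≠ ⊤ := by
    rw [hμVW]
    exact ENNReal.mul_ne_top (by norm_num) (ENNReal.inv_ne_top.2 (by
      exact_mod_cast (Fact.out : p.Prime).ne_zero))
  have hμU_ne : μ U ≠ ⊤ := by
    refine ne_top_of_le_ne_top ?_ (measure_mono (hU ▸ Set.diff_subset : U ⊆ Z))
    rw [hμ]; exact ENNReal.one_ne_top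
  have hsum_meas : (1:ℝ≥0∞) = μ U + μ (V ∪ W) := by
    rw [← hμ]
    nth_rewrite 1 [hZdecomp]
    rw [measure_union hdU (hmV.union hmW)]
  have hμU_real : (μ U).toReal = 1 - 2 * (p:ℝ)⁻¹ := by
    have h2 := congrArg ENNReal.toReal hsum_meas
    rw [ENNReal.toReal_add hμU_ne hμVW_ne, hμVW] at h2
    rw [ENNReal.toReal_mul, ENNReal.toReal_inv] at h2
    simp only [ENNReal.toReal_one, ENNReal.toReal_ofNat, ENNReal.toReal_natCast] at h2
    linarith
  -- key integrals
  have key2 := key_integral μ hμ z₂ qih hz₂ hqih 0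
  simp only [sub_zero] at key2
  have key1 := key_integral μ hμ z₁ qih hz₁ hqih (-1)
  -- EqOn facts
  have hFU : Set.EqOn F (fun _ => (1:ℂ)) U := by
    intro x hx
    obtain ⟨hxZ, hxVW⟩ := hx
    have hxV : ¬ ‖x‖ ≤ (p:ℝ)^(-1:ℤ) := fun h => hxVW (Or.inl h)
    have hxW : ¬ ‖x - (-1)‖ ≤ (p:ℝ)^(-1:ℤ) := fun h => hxVW (Or.inr h)
    rw [sub_neg_eq_add] at hxW
    obtain ⟨hx0, hval0⟩ := val_zero_of_unit hxZ hxV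
    have hx1Z : ‖x + 1‖ ≤ 1 := by
      calc ‖x + 1‖ ≤ max ‖x‖ ‖(1:ℚ_[p])‖ := Padic.nonarchimedean x 1
        _ ≤ 1 := max_le hxZ (le_of_eq norm_one)
    obtain ⟨hx10, hval10⟩ := val_zero_of_unit hx1Z hxW
    have hxne1 : x ≠ -1 := by
      rintro rfl
      exact hx10 (by ring)
    have hcomm : (1 : ℚ_[p]) + x = x + 1 := by ring
    simp only [hF, if_neg (not_or.2 ⟨hx0, hxne1⟩), hcomm, hval10, hval0, zpow_zero,
      neg_zero, one_mul, mul_one]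
  have hFV : Set.EqOn F
      (fun x : ℚ_[p] => if x = 0 then 0 else z₂ ^ x.valuation * qih ^ (-x.valuation)) V := by
    intro x hx
    simp only [hV, Set.mem_setOf_eq] at hx
    by_cases hx0 : x = 0
    · simp [hF, hx0]
    · have hx1 : x ≠ -1 := by
        rintro rfl
        rw [norm_neg, norm_one] at hx
        exact absurd hx (not_le.2 hpinv_lt)
      have hn1x : ‖(1:ℚ_[p]) + x‖ = 1 := by
        have hne : ‖(1:ℚ_[p])‖ ≠ ‖x‖ := by
          rw [norm_one]
          exact (ne_of_lt (lt_of_le_of_lt hx hpinv_lt)).symm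
        rw [Padic.add_eq_max_of_ne hne, norm_one]
        exact max_eq_left (hx.trans hpinv_lt.le)
      have hval := val_zero_of_norm_one hn1x
      simp only [hF, if_neg (not_or.2 ⟨hx0, hx1⟩), if_neg hx0, hval, zpow_zero,
        neg_zero, one_mul]
  have hFW : Set.EqOn F
      (fun x : ℚ_[p] => if x = -1 then 0
        else z₁ ^ (x - (-1)).valuation * qih ^ (-(x - (-1)).valuation)) W := by
    intro x hx
    have hsub : x - (-1) = 1 + x := by ring
    by_cases hx1 : x = -1
    · simp [hF, hx1]
    · have hx0 : x ≠ 0 := by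
        rintro rfl
        simp only [hW, Set.mem_setOf_eq] at hx
        rw [show (0:ℚ_[p]) - (-1) = 1 by ring, norm_one] at hx
        exact absurd hx (not_le.2 hpinv_lt)
      have hvalx := val_zero_of_norm_one (hWx x hx)
      simp only [hF, if_neg (not_or.2 ⟨hx0, hx1⟩), if_neg hx1, hsub, hvalx, zpow_zero,
        neg_zero, mul_one]
  -- integrability
  have hintV : IntegrableOn F V μ := key2.1.congr_fun hFV.symm hmV
  have hintW : IntegrableOn F W μ := key1.1.congr_fun hFW.symm hmW
  have hμU_lt : μ U < ⊤ := lt_top_iff_ne_top.2 hμU_ne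
  have hintU : IntegrableOn F U μ :=
    (integrableOn_const hμU_ne).congr_fun hFU.symm hmU
  have hintVW : IntegrableOn F (V ∪ W) μ := hintV.union hintW
  have hintZ : IntegrableOn F Z μ := by
    rw [hZdecomp]
    exact hintU.union hintVW
  refine ⟨hintZ, ?_⟩
  -- values
  have hIU : ∫ x in U, F x ∂μ = ((1 - 2*(p:ℝ)⁻¹ : ℝ) : ℂ) := by
    rw [setIntegral_congr_fun hmU hFU, setIntegral_const, measureReal_def, hμU_real, Complex.real_smul, mul_one]
  have hIV : ∫ x in V, F x ∂μ = (1 - (p:ℂ)⁻¹) * (z₂ * qih) / (1 - z₂ * qih) := by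
    rw [setIntegral_congr_fun hmV hFV]
    exact key2.2
  have hIW : ∫ x in W, F x ∂μ = (1 - (p:ℂ)⁻¹) * (z₁ * qih) / (1 - z₁ * qih) := by
    rw [setIntegral_congr_fun hmW hFW]
    exact key1.2
  have hsplit : ∫ x in Z, F x ∂μ
      = (∫ x in U, F x ∂μ) + ((∫ x in V, F x ∂μ) + (∫ x in W, F x ∂μ)) := by
    rw [hZdecomp, setIntegral_union hdU (hmV.union hmW) hintU hintVW,
      setIntegral_union hdVW hmW hintV hintW]
  rw [hsplit, hIU, hIV, hIW]
  -- final algebra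
  have hq0 : qih ≠ 0 := by
    intro h
    apply hp0
    rw [h] at hqih
    have h2 : ((p:ℂ))⁻¹ = 0 := by rw [← hqih]; ring
    simpa using h2
  have hnq2 : ‖qih‖^2 = (p:ℝ)⁻¹ := by
    have := congrArg norm hqih
    rw [norm_pow, norm_inv] at this
    simpa using this
  have hnqlt : ‖qih‖ < 1 := by
    nlinarith [norm_nonneg qih, one_lt_p (p := p), inv_lt_one_of_one_lt₀ (one_lt_p (p := p))]
  have hden : ∀ z : ℂ, ‖z‖ = 1 → 1 - z * qih ≠ 0 := by
    intro z hz h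
    have h1 : (1:ℂ) = z * qih := by linear_combination h
    have h2 := congrArg norm h1
    rw [norm_one, norm_mul, hz, one_mul] at h2
    rw [← h2] at hnqlt
    exact lt_irrefl 1 hnqlt
  have hden1 : (1:ℂ) - z₁ * qih ≠ 0 := hden z₁ hz₁
  have hden2 : (1:ℂ) - z₂ * qih ≠ 0 := hden z₂ hz₂
  have hden1' : (1:ℂ) - qih * z₁ ≠ 0 := by rw [mul_comm]; exact hden1
  have hden2' : (1:ℂ) - qih * z₂ ≠ 0 := by rw [mul_comm]; exact hden2
  have hpc : (p:ℂ) = (qih^2)⁻¹ := by rw [hqih, inv_inv]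
  have hpinv : (p:ℂ)⁻¹ = qih^2 := hqih.symm
  push_cast
  rw [hpinv, hpc]
  field_simp
  ring
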